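/- Let ω > 0 and t with sin(ωt) ≠ 0, fix y ∈ ℝ³, and let K(x) = exp(iω(|x−y|²/2·cot(ωt) − x̃·y)) with x̃ = (−x₂, x₁, (csc(ωt)−cot(ωt))x₃). Then i∂ₜK + (1/2)ΔK − (ω²/2)|x|²K + ω·i(x₂∂_{x₁} − x₁∂_{x₂})K = (3/2)iω cot(ωt) K, i.e. the kernel solves the linear rotating harmonic oscillator equation up to the factor coming from the time-dependent amplitude (sin ωt)^{-3/2}. -/

import Mathlib

open Real Complex

noncomputable def Dt (u : ℝ → ℝ → ℝ → ℝ → ℂ) : ℝ → ℝ → ℝ → ℝ → ℂ :=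
  fun t a b c => deriv (fun s => u s a b c) t

noncomputable def D1 (u : ℝ → ℝ → ℝ → ℝ → ℂ) : ℝ → ℝ → ℝ → ℝ → ℂ :=
  fun t a b c => deriv (fun s => u t s b c) a

noncomputable def D2 (u : ℝ → ℝ → ℝ → ℝ → ℂ) : ℝ → ℝ → ℝ → ℝ → ℂ :=
  fun t a b c => deriv (fun s => u t a s c) b

noncomputable def D3 (u : ℝ → ℝ → ℝ → ℝ → ℂ) : ℝ → ℝ → ℝ → ℝ → ℂ :=
  fun t a b c => deriv (fun s => u t a b s) c

private lemma exp_deriv' (ω : ℝ) {g : ℝ → ℝ} {g' x : ℝ} (hg : HasDerivAt g g' x) :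
    HasDerivAt (fun s : ℝ => Complex.exp (Complex.I * (ω : ℂ) * ((g s : ℝ) : ℂ)))
      (Complex.I * (ω : ℂ) * ((g' : ℝ) : ℂ) *
        Complex.exp (Complex.I * (ω : ℂ) * ((g x : ℝ) : ℂ))) x := by
  have h := ((hg.ofReal_comp).const_mul (Complex.I * (ω : ℂ))).cexp
  convert h using 1
  ring

private lemma quad_hasDerivAt (p2 p1 p0 x : ℝ) :
    HasDerivAt (fun s : ℝ => p2 * s ^ 2 + p1 * s + p0) (2 * p2 * x + p1) x := by
  have h2 : HasDerivAt (fun s : ℝ => s ^ 2) (2 * x) x := by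
    simpa using hasDerivAt_pow 2 x
  have h := ((h2.const_mul p2).add ((hasDerivAt_id x).const_mul p1)).add_const p0
  refine h.congr_deriv (Eq.symm ?_)
  ring

private lemma deriv2_exp_quad (ω p2 p1 p0 x : ℝ) :
    HasDerivAt (fun s : ℝ => Complex.I * (ω : ℂ) * ((2 * p2 * s + p1 : ℝ) : ℂ) *
        Complex.exp (Complex.I * (ω : ℂ) * ((p2 * s ^ 2 + p1 * s + p0 : ℝ) : ℂ)))
      ((Complex.I * (ω : ℂ) * ((2 * p2 : ℝ) : ℂ)
          + (Complex.I * (ω : ℂ) * ((2 * p2 * x + p1 : ℝ) : ℂ)) ^ 2) *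
        Complex.exp (Complex.I * (ω : ℂ) * ((p2 * x ^ 2 + p1 * x + p0 : ℝ) : ℂ))) x := by
  have hlinR : HasDerivAt (fun s : ℝ => 2 * p2 * s + p1) (2 * p2) x := by
    simpa using ((hasDerivAt_id x).const_mul (2 * p2)).add_const p1
  have hlin : HasDerivAt (fun s : ℝ => ((2 * p2 * s + p1 : ℝ) : ℂ)) ((2 * p2 : ℝ) : ℂ) x :=
    hlinR.ofReal_comp
  have h := (hlin.const_mul (Complex.I * (ω : ℂ))).mul (exp_deriv' ω (quad_hasDerivAt p2 p1 p0 x))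
  refine h.congr_deriv (Eq.symm ?_)
  push_cast
  ring

private lemma quad_package (ω p2 p1 p0 : ℝ) (F : ℝ → ℂ)
    (hF : F = fun s : ℝ =>
      Complex.exp (Complex.I * (ω : ℂ) * ((p2 * s ^ 2 + p1 * s + p0 : ℝ) : ℂ))) :
    (∀ x : ℝ, deriv F x
        = Complex.I * (ω : ℂ) * ((2 * p2 * x + p1 : ℝ) : ℂ) * F x) ∧
    (∀ x : ℝ, deriv (fun s => deriv F s) x
        = (Complex.I * (ω : ℂ) * ((2 * p2 : ℝ) : ℂ)
            + (Complex.I * (ω : ℂ) * ((2 * p2 * x + p1 : ℝ) : ℂ)) ^ 2) * F x) := by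
  subst hF
  constructor
  · intro x
    exact (exp_deriv' ω (quad_hasDerivAt p2 p1 p0 x)).deriv
  · intro x
    have h1 : (deriv fun s : ℝ =>
          Complex.exp (Complex.I * (ω : ℂ) * ((p2 * s ^ 2 + p1 * s + p0 : ℝ) : ℂ)))
        = fun s : ℝ => Complex.I * (ω : ℂ) * ((2 * p2 * s + p1 : ℝ) : ℂ) *
            Complex.exp (Complex.I * (ω : ℂ) * ((p2 * s ^ 2 + p1 * s + p0 : ℝ) : ℂ)) :=
      funext fun s => (exp_deriv' ω (quad_hasDerivAt p2 p1 p0 s)).deriv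
    rw [h1]
    exact (deriv2_exp_quad ω p2 p1 p0 x).deriv

theorem kernel_solves_equation_up_to_amplitude (ω : ℝ) (hω : 0 < ω) (y₁ y₂ y₃ : ℝ) :
    let cot : ℝ → ℝ := fun τ => Real.cos (ω * τ) / Real.sin (ω * τ)
    let csc : ℝ → ℝ := fun τ => 1 / Real.sin (ω * τ)
    let K : ℝ → ℝ → ℝ → ℝ → ℂ := fun τ a b c =>
      Complex.exp (Complex.I * (ω : ℂ) *
        ((((a - y₁) ^ 2 + (b - y₂) ^ 2 + (c - y₃) ^ 2) / 2 * cot τ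
          - (-b * y₁ + a * y₂ + (csc τ - cot τ) * c * y₃) : ℝ) : ℂ))
    ∀ t a b c : ℝ, Real.sin (ω * t) ≠ 0 →
      Complex.I * Dt K t a b c
        + (1 / 2 : ℂ) * (D1 (D1 K) t a b c + D2 (D2 K) t a b c + D3 (D3 K) t a b c)
        - ((ω : ℂ) ^ 2 / 2) * ((a ^ 2 + b ^ 2 + c ^ 2 : ℝ) : ℂ) * K t a b c
        + (ω : ℂ) * (Complex.I * ((b : ℂ) * D1 K t a b c - (a : ℂ) * D2 K t a b c)) =
      (3 / 2 : ℂ) * Complex.I * (ω : ℂ) * (cot t : ℂ) * K t a b c := by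
  intro cot csc K t a b c hs
  have hKdef : ∀ τ u v w : ℝ, K τ u v w = Complex.exp (Complex.I * (ω : ℂ) *
      ((((u - y₁) ^ 2 + (v - y₂) ^ 2 + (w - y₃) ^ 2) / 2 * cot τ
        - (-v * y₁ + u * y₂ + (csc τ - cot τ) * w * y₃) : ℝ) : ℂ)) := fun _ _ _ _ => rfl
  -- derivatives of cot and csc
  have hωt : HasDerivAt (fun τ : ℝ => ω * τ) ω t := by
    simpa using (hasDerivAt_id t).const_mul ω
  have hsin : HasDerivAt (fun τ : ℝ => Real.sin (ω * τ)) (Real.cos (ω * t) * ω) t := by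
    simpa [Function.comp_def] using (Real.hasDerivAt_sin (ω * t)).comp t hωt
  have hcos : HasDerivAt (fun τ : ℝ => Real.cos (ω * τ)) (-Real.sin (ω * t) * ω) t := by
    simpa [Function.comp_def] using (Real.hasDerivAt_cos (ω * t)).comp t hωt
  have hcotF : HasDerivAt cot (-(ω * csc t ^ 2)) t := by
    have h := hcos.div hsin hs
    refine h.congr_deriv (Eq.symm ?_)
    show -(ω * (1 / Real.sin (ω * t)) ^ 2) = _
    field_simp
    linear_combination Real.sin_sq_add_cos_sq (ω * t)
  have hcscF : HasDerivAt csc (-(ω * csc t * cot t)) t := by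
    have h := (hasDerivAt_const t (1 : ℝ)).div hsin hs
    refine h.congr_deriv (Eq.symm ?_)
    show -(ω * (1 / Real.sin (ω * t)) * (Real.cos (ω * t) / Real.sin (ω * t))) = _
    field_simp
    ring
  -- time derivative of the kernel
  have hG : HasDerivAt (fun τ : ℝ =>
        ((a - y₁) ^ 2 + (b - y₂) ^ 2 + (c - y₃) ^ 2) / 2 * cot τ
          - (-b * y₁ + a * y₂ + (csc τ - cot τ) * c * y₃))
      (-(ω * csc t ^ 2) * (((a - y₁) ^ 2 + (b - y₂) ^ 2 + (c - y₃) ^ 2) / 2)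
        - (-(ω * csc t * cot t) + ω * csc t ^ 2) * (c * y₃)) t := by
    have h := (hcotF.const_mul (((a - y₁) ^ 2 + (b - y₂) ^ 2 + (c - y₃) ^ 2) / 2)).sub
      ((((hcscF.sub hcotF).mul_const c).mul_const y₃).const_add (-b * y₁ + a * y₂))
    refine h.congr_deriv (Eq.symm ?_)
    ring
  have hDt : deriv (fun s => K s a b c) t
      = Complex.I * (ω : ℂ) *
          ((-(ω * csc t ^ 2) * (((a - y₁) ^ 2 + (b - y₂) ^ 2 + (c - y₃) ^ 2) / 2)
            - (-(ω * csc t * cot t) + ω * csc t ^ 2) * (c * y₃) : ℝ) : ℂ) * K t a b c := by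
    have h := (exp_deriv' ω hG).deriv
    rw [hKdef]
    exact h
  -- spatial derivative packages
  have Ha := quad_package ω (cot t / 2) (-y₁ * cot t - y₂)
      ((y₁ ^ 2 + (b - y₂) ^ 2 + (c - y₃) ^ 2) / 2 * cot t + b * y₁ - (csc t - cot t) * c * y₃)
      (fun s => K t s b c)
      (by funext s; rw [hKdef]; congr 1; push_cast; ring)
  have Hb := quad_package ω (cot t / 2) (-y₂ * cot t + y₁)
      (((a - y₁) ^ 2 + y₂ ^ 2 + (c - y₃) ^ 2) / 2 * cot t - a * y₂ - (csc t - cot t) * c * y₃)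
      (fun s => K t a s c)
      (by funext s; rw [hKdef]; congr 1; push_cast; ring)
  have Hc := quad_package ω (cot t / 2) (-y₃ * cot t - (csc t - cot t) * y₃)
      (((a - y₁) ^ 2 + (b - y₂) ^ 2 + y₃ ^ 2) / 2 * cot t + b * y₁ - a * y₂)
      (fun s => K t a b s)
      (by funext s; rw [hKdef]; congr 1; push_cast; ring)
  -- Pythagorean relation
  have hreal : csc t ^ 2 = cot t ^ 2 + 1 := by
    show (1 / Real.sin (ω * t)) ^ 2 = (Real.cos (ω * t) / Real.sin (ω * t)) ^ 2 + 1
    field_simp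
    exact (Real.cos_sq_add_sin_sq _).symm
  have hcs2 : ((csc t : ℝ) : ℂ) ^ 2 = ((cot t : ℝ) : ℂ) ^ 2 + 1 := by
    exact_mod_cast congrArg (fun r : ℝ => (r : ℂ)) hreal
  simp only [Dt, D1, D2, D3]
  rw [hDt, Ha.2 a, Hb.2 b, Hc.2 c]
  simp only [Ha.1, Hb.1, Hc.1]
  push_cast
  linear_combination
    ((ω : ℂ) ^ 2 / 2 * (K t a b c) *
        ((a : ℂ) ^ 2 + (b : ℂ) ^ 2 + (c : ℂ) ^ 2 + (y₁ : ℂ) ^ 2 + (y₂ : ℂ) ^ 2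
          - 2 * (a : ℂ) * (y₁ : ℂ) - 2 * (b : ℂ) * (y₂ : ℂ))) * hcs2
    + ((ω : ℂ) ^ 2 / 2 * (K t a b c) *
        ((1 - ((csc t : ℝ) : ℂ) ^ 2 + ((cot t : ℝ) : ℂ) ^ 2) *
            ((y₁ : ℂ) ^ 2 + (y₂ : ℂ) ^ 2 - 2 * (a : ℂ) * (y₁ : ℂ) - 2 * (b : ℂ) * (y₂ : ℂ))
          + (((cot t : ℝ) : ℂ) ^ 2 - ((csc t : ℝ) : ℂ) ^ 2) *
            ((a : ℂ) ^ 2 + (b : ℂ) ^ 2 + (c : ℂ) ^ 2))) * Complex.I_sq
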